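/- Let Ω be a nonempty finite set, G ≤ Sym(Ω) a permutation group, and n ≥ 1 an integer. Then G is n-complete if and only if it is not the case that (G is trivial and n = 1), and for every α ∈ Ω the point stabiliser G_α, regarded as a permutation group on Ω \ {α}, is (n−1)-complete. -/

import Mathlib

/-- `B` is a base for the permutation group `G ≤ Sym(Ω)`: its pointwise
stabiliser in `G` is trivial. -/
def IsBase {Ω : Type*} (G : Subgroup (Equiv.Perm Ω)) (B : Set Ω) : Prop :=
  ∀ g ∈ G, (∀ b ∈ B, g b = b) → g = 1

/-- The base size of `G` relative to a set `Δ` of points: the minimum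
cardinality of a base for `G` contained in `Δ`. -/
noncomputable def baseSizeOn {Ω : Type*} (G : Subgroup (Equiv.Perm Ω)) (Δ : Set Ω) : ℕ :=
  sInf {n | ∃ B : Set Ω, B ⊆ Δ ∧ IsBase G B ∧ B.ncard = n}

/-- `G`, regarded as acting on the set `Δ`, is `n`-complete: its base size
(relative to `Δ`) is `n` and every `n`-element subset of `Δ` is a base. -/
def IsNCompleteOn {Ω : Type*} (G : Subgroup (Equiv.Perm Ω)) (Δ : Set Ω) (n : ℕ) : Prop :=
  baseSizeOn G Δ = n ∧ ∀ B : Set Ω, B ⊆ Δ → B.ncard = n → IsBase G B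

lemma isBase_compl_singleton {Ω : Type*} (G : Subgroup (Equiv.Perm Ω)) (α : Ω) :
    IsBase (G ⊓ MulAction.stabilizer (Equiv.Perm Ω) α) {α}ᶜ := by
  intro g hg hfix
  ext x
  by_cases hx : x = α
  · subst hx
    simpa [Equiv.Perm.smul_def] using hg.2
  · exact hfix x hx

lemma isBase_stab_iff {Ω : Type*} (G : Subgroup (Equiv.Perm Ω)) (α : Ω) (B : Set Ω) :
    IsBase (G ⊓ MulAction.stabilizer (Equiv.Perm Ω) α) B ↔ IsBase G (insert α B) := by
  constructor
  · intro h g hg hfix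
    refine h g ⟨hg, ?_⟩ (fun b hb => hfix b (Set.mem_insert_of_mem _ hb))
    simpa [MulAction.mem_stabilizer_iff, Equiv.Perm.smul_def] using
      hfix α (Set.mem_insert _ _)
  · intro h g hg hfix
    refine h g hg.1 ?_
    intro b hb
    rcases Set.mem_insert_iff.mp hb with rfl | hb
    · simpa [Equiv.Perm.smul_def] using hg.2
    · exact hfix b hb

theorem statement_0 {Ω : Type*} [Fintype Ω] [Nonempty Ω]
    (G : Subgroup (Equiv.Perm Ω)) (n : ℕ) (hn : 1 ≤ n) :
    IsNCompleteOn G Set.univ n ↔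
      ¬(G = ⊥ ∧ n = 1) ∧
        ∀ α : Ω, IsNCompleteOn (G ⊓ MulAction.stabilizer (Equiv.Perm Ω) α) {α}ᶜ (n - 1) := by
  classical
  set SU : Set ℕ := {m | ∃ B : Set Ω, B ⊆ Set.univ ∧ IsBase G B ∧ B.ncard = m} with hSU
  have hSUne : SU.Nonempty := by
    refine ⟨(Set.univ : Set Ω).ncard, Set.univ, subset_rfl, ?_, rfl⟩
    intro g hg hfix
    ext x
    exact hfix x (Set.mem_univ x)
  have hbsU : baseSizeOn G Set.univ = sInf SU := rfl
  -- the defining set for each stabilizer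
  have hSA : ∀ α : Ω, baseSizeOn (G ⊓ MulAction.stabilizer (Equiv.Perm Ω) α) {α}ᶜ
      = sInf {m | ∃ B : Set Ω, B ⊆ {α}ᶜ ∧
          IsBase (G ⊓ MulAction.stabilizer (Equiv.Perm Ω) α) B ∧ B.ncard = m} := fun α => rfl
  have hSAne : ∀ α : Ω, Set.Nonempty {m | ∃ B : Set Ω, B ⊆ {α}ᶜ ∧
      IsBase (G ⊓ MulAction.stabilizer (Equiv.Perm Ω) α) B ∧ B.ncard = m} := by
    intro α
    exact ⟨({α}ᶜ : Set Ω).ncard, {α}ᶜ, subset_rfl, isBase_compl_singleton G α, rfl⟩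
  have hcardcompl : ∀ α : Ω, ({α}ᶜ : Set Ω).ncard = (Set.univ : Set Ω).ncard - 1 := by
    intro α
    rw [Set.compl_eq_univ_diff, Set.ncard_diff_singleton_of_mem (Set.mem_univ α)]
  constructor
  · rintro ⟨hsize, hcomp⟩
    have hnmem : n ∈ SU := by
      rw [hbsU] at hsize
      rw [← hsize]
      exact Nat.sInf_mem hSUne
    obtain ⟨B₀, -, -, hB₀card⟩ := hnmem
    have hcardΩ : n ≤ (Set.univ : Set Ω).ncard := by
      rw [← hB₀card]
      exact Set.ncard_le_ncard (Set.subset_univ _) (Set.toFinite _)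
    constructor
    · rintro ⟨hG, rfl⟩
      have h0 : (0 : ℕ) ∈ SU := by
        refine ⟨∅, Set.empty_subset _, ?_, Set.ncard_empty _⟩
        intro g hg _
        rw [hG] at hg
        exact hg
      have := Nat.sInf_le h0
      rw [hbsU] at hsize
      omega
    · intro α
      have hcomp' : ∀ B : Set Ω, B ⊆ {α}ᶜ → B.ncard = n - 1 →
          IsBase (G ⊓ MulAction.stabilizer (Equiv.Perm Ω) α) B := by
        intro B hB hcard
        rw [isBase_stab_iff]
        refine hcomp _ (Set.subset_univ _) ?_
        rw [Set.ncard_insert_of_notMem (fun h => (hB h) rfl) (Set.toFinite B), hcard]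
        omega
      refine ⟨?_, hcomp'⟩
      rw [hSA]
      -- membership of n - 1
      obtain ⟨B₁, hB₁sub, hB₁card⟩ := Set.exists_subset_card_eq (s := ({α}ᶜ : Set Ω)) (n := n - 1)
        (by rw [hcardcompl]; omega)
      have hmem : n - 1 ∈ {m | ∃ B : Set Ω, B ⊆ {α}ᶜ ∧
          IsBase (G ⊓ MulAction.stabilizer (Equiv.Perm Ω) α) B ∧ B.ncard = m} :=
        ⟨B₁, hB₁sub, hcomp' B₁ hB₁sub hB₁card, hB₁card⟩
      refine le_antisymm (Nat.sInf_le hmem) ?_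
      obtain ⟨B, hBsub, hBbase, hBcard⟩ := Nat.sInf_mem (hSAne α)
      rw [isBase_stab_iff] at hBbase
      have hm : (insert α B).ncard ∈ SU :=
        ⟨insert α B, Set.subset_univ _, hBbase, rfl⟩
      have hle := Nat.sInf_le hm
      rw [hbsU] at hsize
      rw [Set.ncard_insert_of_notMem (fun h => (hBsub h) rfl) (Set.toFinite B)] at hle
      omega
  · rintro ⟨hnot, hstab⟩
    have hcompG : ∀ B : Set Ω, B ⊆ Set.univ → B.ncard = n → IsBase G B := by
      intro B _ hcard
      have hne : B.Nonempty := by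
        rw [← Set.ncard_pos (Set.toFinite B)]
        omega
      obtain ⟨α, hα⟩ := hne
      have h1 : IsBase (G ⊓ MulAction.stabilizer (Equiv.Perm Ω) α) (B \ {α}) := by
        refine (hstab α).2 (B \ {α}) (fun x hx => hx.2) ?_
        rw [Set.ncard_diff_singleton_of_mem hα, hcard]
      rw [isBase_stab_iff, Set.insert_diff_singleton, Set.insert_eq_of_mem hα] at h1
      exact h1
    refine ⟨?_, hcompG⟩
    rw [hbsU]
    -- membership of n
    obtain ⟨α⟩ := (inferInstance : Nonempty Ω)
    have hs := (hstab α).1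
    rw [hSA] at hs
    obtain ⟨B₀, hB₀sub, -, hB₀card⟩ := Nat.sInf_mem (hSAne α)
    rw [hs] at hB₀card
    have hins : (insert α B₀).ncard = n := by
      rw [Set.ncard_insert_of_notMem (fun h => (hB₀sub h) rfl) (Set.toFinite B₀), hB₀card]
      omega
    have hmemn : n ∈ SU :=
      ⟨insert α B₀, Set.subset_univ _, hcompG _ (Set.subset_univ _) hins, hins⟩
    refine le_antisymm (Nat.sInf_le hmemn) ?_
    obtain ⟨B, -, hBbase, hBcard⟩ := Nat.sInf_mem hSUne
    rcases B.eq_empty_or_nonempty with rfl | ⟨β, hβ⟩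
    · -- G is trivial
      have hG : G = ⊥ := by
        rw [eq_bot_iff]
        intro g hg
        rw [Subgroup.mem_bot]
        exact hBbase g hg (fun b hb => absurd hb (Set.notMem_empty b))
      have h0 : (0 : ℕ) ∈ {m | ∃ B : Set Ω, B ⊆ {α}ᶜ ∧
          IsBase (G ⊓ MulAction.stabilizer (Equiv.Perm Ω) α) B ∧ B.ncard = m} := by
        refine ⟨∅, Set.empty_subset _, ?_, Set.ncard_empty _⟩
        intro g hg _
        simpa [hG, Subgroup.mem_bot] using hg.1
      have := Nat.sInf_le h0
      rw [← hSA α, (hstab α).1] at this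
      have hn1 : n = 1 := by omega
      exact absurd ⟨hG, hn1⟩ hnot
    · have h1 : IsBase (G ⊓ MulAction.stabilizer (Equiv.Perm Ω) β) (B \ {β}) := by
        rw [isBase_stab_iff, Set.insert_diff_singleton, Set.insert_eq_of_mem hβ]
        exact hBbase
      have hm : (B \ {β}).ncard ∈ {m | ∃ B : Set Ω, B ⊆ {β}ᶜ ∧
          IsBase (G ⊓ MulAction.stabilizer (Equiv.Perm Ω) β) B ∧ B.ncard = m} :=
        ⟨B \ {β}, fun x hx => hx.2, h1, rfl⟩
      have hle := Nat.sInf_le hm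
      rw [← hSA β, (hstab β).1] at hle
      rw [Set.ncard_diff_singleton_of_mem hβ] at hle
      have hBpos : 1 ≤ B.ncard := (Set.ncard_pos (Set.toFinite B)).mpr ⟨β, hβ⟩
      omega
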